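/- Let M be an n-element finite matroid and (e₁,…,eₙ) a path-decomposition of M of width t. For an index i, let X = {e₁,…,e_i} and Y = {e_{i+1},…,eₙ} = E(M)∖X, and suppose λ_M(X) = t. Assume there exists a circuit C ⊆ E(M) such that no element of C lies in cl_M(X) ∩ cl_M(Y) and μ_M(X,C) = r_M(C). Then X ∩ C ≠ ∅ and Y ∩ C ≠ ∅. -/

import Mathlib

/-- A finite matroid on ground set `E`, given by its rank function, which satisfies
`r ∅ = 0`, the unit-increase property, and submodularity (on subsets of `E`). -/
structure FinMatroid (α : Type*) [DecidableEq α] where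
  E : Finset α
  r : Finset α → ℕ
  r_empty : r ∅ = 0
  r_le_insert : ∀ X ⊆ E, ∀ e ∈ E, r X ≤ r (insert e X)
  r_insert_le : ∀ X ⊆ E, ∀ e ∈ E, r (insert e X) ≤ r X + 1
  r_submod : ∀ X ⊆ E, ∀ Y ⊆ E, r (X ∪ Y) + r (X ∩ Y) ≤ r X + r Y

namespace FinMatroid

variable {α : Type*} [DecidableEq α]

/-- A set is independent if it is a subset of the ground set whose rank equals its
cardinality. -/
def Indep (M : FinMatroid α) (X : Finset α) : Prop :=
  X ⊆ M.E ∧ M.r X = X.card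

/-- A set is dependent if it is a subset of the ground set that is not independent. -/
def Dep (M : FinMatroid α) (X : Finset α) : Prop :=
  X ⊆ M.E ∧ M.r X ≠ X.card

/-- A circuit is a minimal dependent set: a dependent set all of whose proper subsets
are independent. -/
def Circuit (M : FinMatroid α) (C : Finset α) : Prop :=
  M.Dep C ∧ ∀ C' ⊂ C, M.Indep C'

/-- The connectivity function `λ_M(X) = r(X) + r(E \ X) - r(E)`. -/
def lambda (M : FinMatroid α) (X : Finset α) : ℤ :=
  (M.r X : ℤ) + (M.r (M.E \ X) : ℤ) - (M.r M.E : ℤ)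

/-- `μ_M(X, A) = r(X ∪ A) + r((E \ X) ∪ A) - r(E)`. -/
def mu (M : FinMatroid α) (X A : Finset α) : ℤ :=
  (M.r (X ∪ A) : ℤ) + (M.r ((M.E \ X) ∪ A) : ℤ) - (M.r M.E : ℤ)

/-- The closure `cl_M(X) = {e ∈ E : r(X ∪ {e}) = r(X)}`. -/
def cl (M : FinMatroid α) (X : Finset α) : Finset α :=
  M.E.filter fun e => M.r (insert e X) = M.r X

/-- The width of the path-decomposition (ordering) given by the list `L`:
the maximum of `λ_M({e₁, …, e_i})` over the nonempty prefixes of `L`. -/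
def pdWidth (M : FinMatroid α) (L : List α) : ℤ :=
  ((List.range L.length).map fun i => M.lambda (L.take (i + 1)).toFinset).foldr max 0

/-- The path-width of a matroid: the minimum width over all orderings of the ground
set. -/
noncomputable def pathwidth (M : FinMatroid α) : ℤ :=
  sInf (M.pdWidth '' { L : List α | L.Nodup ∧ L.toFinset = M.E })

end FinMatroid


namespace FinMatroid

variable {α : Type*} [DecidableEq α]

private lemma r_union_right (M : FinMatroid α) {X : Finset α} (hX : X ⊆ M.E) :
    ∀ S : Finset α, S ⊆ M.E → M.r X ≤ M.r (X ∪ S) := by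
  intro S
  induction S using Finset.induction_on with
  | empty => simp
  | @insert a S ha ih =>
    intro hS
    have haE : a ∈ M.E := hS (Finset.mem_insert_self a S)
    have hS' : S ⊆ M.E := (Finset.subset_insert a S).trans hS
    have h1 : M.r X ≤ M.r (X ∪ S) := ih hS'
    have h2 : M.r (X ∪ S) ≤ M.r (insert a (X ∪ S)) :=
      M.r_le_insert (X ∪ S) (Finset.union_subset hX hS') a haE
    rw [Finset.union_insert]
    exact h1.trans h2

private lemma r_mono (M : FinMatroid α) {X Y : Finset α} (hY : Y ⊆ M.E) (hXY : X ⊆ Y) :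
    M.r X ≤ M.r Y := by
  have h := M.r_union_right (hXY.trans hY) (Y \ X) (Finset.sdiff_subset.trans hY)
  rwa [Finset.union_sdiff_of_subset hXY] at h

private lemma insert_r_eq_of_subset (M : FinMatroid α) {A B : Finset α} (hB : B ⊆ M.E)
    (hAB : A ⊆ B) {e : α} (he : e ∈ M.E) (h : M.r (insert e A) = M.r A) :
    M.r (insert e B) = M.r B := by
  by_cases heB : e ∈ B
  · rw [Finset.insert_eq_self.mpr heB]
  · have hAE : insert e A ⊆ M.E := Finset.insert_subset he (hAB.trans hB)
    have hsub := M.r_submod B hB (insert e A) hAE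
    have h1 : B ∪ insert e A = insert e B := by
      ext x
      simp only [Finset.mem_union, Finset.mem_insert]
      have hx : x ∈ A → x ∈ B := fun hx => hAB hx
      tauto
    have h2 : B ∩ insert e A = A := by
      ext x
      simp only [Finset.mem_inter, Finset.mem_insert]
      have hx : x ∈ A → x ∈ B := fun hx => hAB hx
      constructor
      · rintro ⟨hxB, (rfl | hxA)⟩
        · exact absurd hxB heB
        · exact hxA
      · exact fun hxA => ⟨hx hxA, Or.inr hxA⟩
    rw [h1, h2, h] at hsub
    have h3 := M.r_le_insert B hB e he
    omega

private lemma circuit_nonempty (M : FinMatroid α) {C : Finset α} (hC : M.Circuit C) :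
    C.Nonempty := by
  rw [Finset.nonempty_iff_ne_empty]
  rintro rfl
  exact hC.1.2 (by simp [M.r_empty])

private lemma circuit_r_erase (M : FinMatroid α) {C : Finset α} (hC : M.Circuit C)
    {f : α} (hf : f ∈ C) : M.r (C.erase f) = C.card - 1 := by
  have h := hC.2 (C.erase f) (Finset.erase_ssubset hf)
  rw [h.2, Finset.card_erase_of_mem hf]

private lemma circuit_r (M : FinMatroid α) {C : Finset α} (hC : M.Circuit C) :
    M.r C = C.card - 1 := by
  obtain ⟨f, hf⟩ := M.circuit_nonempty hC
  have hCE : C ⊆ M.E := hC.1.1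
  have h0 := M.circuit_r_erase hC hf
  have h1 : M.r (C.erase f) ≤ M.r C := M.r_mono hCE (Finset.erase_subset f C)
  have h2 : M.r C ≤ M.r (C.erase f) + 1 := by
    conv_lhs => rw [← Finset.insert_erase hf]
    exact M.r_insert_le (C.erase f) ((Finset.erase_subset f C).trans hCE) f (hCE hf)
  have h3 : M.r C ≠ C.card := hC.1.2
  have h4 : 1 ≤ C.card := Finset.card_pos.mpr ⟨f, hf⟩
  omega

private lemma lambda_nonneg (M : FinMatroid α) {X : Finset α} (hX : X ⊆ M.E) :
    0 ≤ M.lambda X := by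
  have h := M.r_submod X hX (M.E \ X) Finset.sdiff_subset
  rw [Finset.union_sdiff_of_subset hX, Finset.inter_sdiff_self, M.r_empty] at h
  unfold lambda
  push_cast
  omega

set_option maxHeartbeats 1000000 in
/-- Key lemma: if `C ⊆ E \ X` is a circuit with `μ(X,C) = r(C)`, none of whose elements
lies in `cl(X) ∩ cl(E \ X)`, then adding to `X` any elements of `E` outside `X ∪ C`
together with a single element of `C` strictly raises the connectivity. -/
private lemma key (M : FinMatroid α) (X : Finset α) (hXE : X ⊆ M.E)
    (C : Finset α) (hC : M.Circuit C) (hXC : Disjoint X C)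
    (hguts : ∀ e ∈ C, e ∉ M.cl X ∩ M.cl (M.E \ X))
    (hmu : M.mu X C = (M.r C : ℤ))
    (Z : Finset α) (hZE : Z ⊆ M.E) (hZX : Disjoint Z X) (hZC : Disjoint Z C)
    (f : α) (hf : f ∈ C) :
    M.lambda X + 1 ≤ M.lambda (X ∪ Z ∪ {f}) := by
  have hCE : C ⊆ M.E := hC.1.1
  have hfE : f ∈ M.E := hCE hf
  have hfX : f ∉ X := fun h => (Finset.disjoint_left.mp hXC h) hf
  have hfZ : f ∉ Z := fun h => (Finset.disjoint_left.mp hZC h) hf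
  have hPE : X ∪ Z ∪ {f} ⊆ M.E := by
    refine Finset.union_subset (Finset.union_subset hXE hZE) ?_
    simpa using hfE
  -- (a)  r (insert f X) = r X + 1
  have hCfY : C.erase f ⊆ M.E \ X := by
    intro x hx
    have hxC : x ∈ C := Finset.mem_of_mem_erase hx
    exact Finset.mem_sdiff.mpr ⟨hCE hxC, fun hxX => Finset.disjoint_left.mp hXC hxX hxC⟩
  have hins : M.r (insert f (C.erase f)) = M.r (C.erase f) := by
    rw [Finset.insert_erase hf, M.circuit_r hC, M.circuit_r_erase hC hf]
  have hfclY : M.r (insert f (M.E \ X)) = M.r (M.E \ X) :=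
    M.insert_r_eq_of_subset Finset.sdiff_subset hCfY hfE hins
  have hfclX : M.r (insert f X) = M.r X + 1 := by
    have h1 : f ∉ M.cl X := by
      intro hmem
      exact hguts f hf (Finset.mem_inter.mpr ⟨hmem, Finset.mem_filter.mpr ⟨hfE, hfclY⟩⟩)
    have h2 : M.r (insert f X) ≠ M.r X := fun h => h1 (Finset.mem_filter.mpr ⟨hfE, h⟩)
    have h3 := M.r_le_insert X hXE f hfE
    have h4 := M.r_insert_le X hXE f hfE
    omega
  -- (b)  r (X ∪ C) + r (E \ X) = r E + r C
  have hYC : (M.E \ X) ∪ C = M.E \ X := Finset.union_eq_left.mpr (by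
    intro x hx
    exact Finset.mem_sdiff.mpr ⟨hCE hx, fun hxX => Finset.disjoint_left.mp hXC hxX hx⟩)
  have hb : (M.r (X ∪ C) : ℤ) + M.r (M.E \ X) = M.r M.E + M.r C := by
    unfold mu at hmu
    rw [hYC] at hmu
    linarith
  -- (c)  submodularity applied to P and X ∪ C
  have hXCE : X ∪ C ⊆ M.E := Finset.union_subset hXE hCE
  have hc0 := M.r_submod (X ∪ Z ∪ {f}) hPE (X ∪ C) hXCE
  have hc1 : (X ∪ Z ∪ {f}) ∪ (X ∪ C) = X ∪ Z ∪ C := by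
    ext x
    simp only [Finset.mem_union, Finset.mem_singleton]
    have e1 : x = f → x ∈ C := fun h => h ▸ hf
    tauto
  have hc2 : (X ∪ Z ∪ {f}) ∩ (X ∪ C) = insert f X := by
    ext x
    simp only [Finset.mem_inter, Finset.mem_union, Finset.mem_singleton, Finset.mem_insert]
    have e1 : x = f → x ∈ C := fun h => h ▸ hf
    have e2 : x ∈ Z → x ∉ X := fun h => Finset.disjoint_left.mp hZX h
    have e3 : x ∈ Z → x ∉ C := fun h => Finset.disjoint_left.mp hZC h
    tauto
  rw [hc1, hc2, hfclX] at hc0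
  -- (d)  submodularity applied to X ∪ Z ∪ C and E \ X
  have hXZCE : X ∪ Z ∪ C ⊆ M.E := Finset.union_subset (Finset.union_subset hXE hZE) hCE
  have hd0 := M.r_submod (X ∪ Z ∪ C) hXZCE (M.E \ X) Finset.sdiff_subset
  have hd1 : (X ∪ Z ∪ C) ∪ (M.E \ X) = M.E := by
    ext x
    simp only [Finset.mem_union, Finset.mem_sdiff]
    have e1 : x ∈ X → x ∈ M.E := fun h => hXE h
    have e2 : x ∈ Z → x ∈ M.E := fun h => hZE h
    have e3 : x ∈ C → x ∈ M.E := fun h => hCE h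
    tauto
  have hd2 : (X ∪ Z ∪ C) ∩ (M.E \ X) = Z ∪ C := by
    ext x
    simp only [Finset.mem_inter, Finset.mem_union, Finset.mem_sdiff]
    have e2 : x ∈ Z → x ∈ M.E := fun h => hZE h
    have e3 : x ∈ C → x ∈ M.E := fun h => hCE h
    have e4 : x ∈ Z → x ∉ X := fun h => Finset.disjoint_left.mp hZX h
    have e5 : x ∈ X → x ∉ C := fun h => Finset.disjoint_left.mp hXC h
    tauto
  rw [hd1, hd2] at hd0
  -- (e)  submodularity applied to E \ P and Z ∪ C
  have hZCE : Z ∪ C ⊆ M.E := Finset.union_subset hZE hCE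
  have he0 := M.r_submod (M.E \ (X ∪ Z ∪ {f})) Finset.sdiff_subset (Z ∪ C) hZCE
  have he1 : (M.E \ (X ∪ Z ∪ {f})) ∪ (Z ∪ C) = M.E \ X := by
    ext x
    simp only [Finset.mem_union, Finset.mem_sdiff, Finset.mem_singleton]
    have e1 : x = f → x ∈ C := fun h => h ▸ hf
    have e2 : x ∈ Z → x ∈ M.E := fun h => hZE h
    have e3 : x ∈ C → x ∈ M.E := fun h => hCE h
    have e4 : x ∈ Z → x ∉ X := fun h => Finset.disjoint_left.mp hZX h
    have e5 : x ∈ X → x ∉ C := fun h => Finset.disjoint_left.mp hXC h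
    tauto
  have he2 : (M.E \ (X ∪ Z ∪ {f})) ∩ (Z ∪ C) = C.erase f := by
    ext x
    simp only [Finset.mem_inter, Finset.mem_union, Finset.mem_sdiff, Finset.mem_singleton,
      Finset.mem_erase]
    have e3 : x ∈ C → x ∈ M.E := fun h => hCE h
    have e4 : x ∈ Z → x ∉ C := fun h => Finset.disjoint_left.mp hZC h
    have e5 : x ∈ X → x ∉ C := fun h => Finset.disjoint_left.mp hXC h
    tauto
  rw [he1, he2] at he0
  -- (f)  r (C.erase f) = r C
  have hf1 : M.r (C.erase f) = M.r C := by
    rw [M.circuit_r hC, M.circuit_r_erase hC hf]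
  rw [hf1] at he0
  -- conclude
  unfold lambda
  push_cast at hc0 hd0 he0 ⊢
  linarith

private lemma le_foldr_max {l : List ℤ} {a : ℤ} (h : a ∈ l) : a ≤ l.foldr max 0 := by
  induction l with
  | nil => simp at h
  | cons b t ih =>
    rcases List.mem_cons.mp h with rfl | h
    · exact le_max_left _ _
    · exact (ih h).trans (le_max_right _ _)

private lemma prefix_lambda_le (M : FinMatroid α) (L : List α) {j : ℕ} (hj : j < L.length) :
    M.lambda (L.take (j + 1)).toFinset ≤ M.pdWidth L := by
  apply le_foldr_max
  exact List.mem_map.mpr ⟨j, List.mem_range.mpr hj, rfl⟩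

private lemma take_toFinset_subset (L : List α) {a b : ℕ} (h : a ≤ b) :
    (L.take a).toFinset ⊆ (L.take b).toFinset := by
  intro x hx
  rw [List.mem_toFinset] at hx ⊢
  have ht : L.take a = (L.take b).take a := by rw [List.take_take, min_eq_left h]
  rw [ht] at hx
  exact List.take_subset _ _ hx

private lemma mem_take_succ_unique {L : List α} {k : ℕ} {x y : α}
    (hx : x ∈ (L.take (k + 1)).toFinset) (hx' : x ∉ (L.take k).toFinset)
    (hy : y ∈ (L.take (k + 1)).toFinset) (hy' : y ∉ (L.take k).toFinset) : x = y := by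
  rw [List.take_succ] at hx hy
  rw [List.mem_toFinset, List.mem_append] at hx hy
  rw [List.mem_toFinset] at hx' hy'
  rcases hx with hx | hx
  · exact absurd hx hx'
  · rcases hy with hy | hy
    · exact absurd hy hy'
    · rw [Option.mem_toList] at hx hy
      rw [hx] at hy
      exact Option.some_inj.mp hy

end FinMatroid

set_option maxHeartbeats 1000000 in
open FinMatroid in
/-- Let `(e₁, …, eₙ)` (the list `L`) be a path-decomposition of `M` of width `t`, let
`X = {e₁, …, e_i}` and `Y = E(M) \ X` with `λ_M(X) = t`. If `C` is a circuit of `M`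
no element of which lies in `cl_M(X) ∩ cl_M(Y)` and `μ_M(X, C) = r_M(C)`, then
`X ∩ C ≠ ∅ ≠ Y ∩ C`. -/
theorem circuit_meets_both_sides {α : Type*} [DecidableEq α] (M : FinMatroid α)
    (L : List α) (hnd : L.Nodup) (hL : L.toFinset = M.E) (t : ℤ)
    (hw : M.pdWidth L = t)
    (i : ℕ) (hi : i ≤ L.length) (X Y : Finset α)
    (hX : X = (L.take i).toFinset) (hY : Y = M.E \ X)
    (hlX : M.lambda X = t)
    (C : Finset α) (hC : M.Circuit C)
    (hguts : ∀ e ∈ C, e ∉ M.cl X ∩ M.cl Y)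
    (hmu : M.mu X C = (M.r C : ℤ)) :
    (X ∩ C).Nonempty ∧ (Y ∩ C).Nonempty := by
  subst hY
  have hXE : X ⊆ M.E := by
    intro x hx
    rw [hX, List.mem_toFinset] at hx
    rw [← hL, List.mem_toFinset]
    exact List.take_subset _ _ hx
  have hCE : C ⊆ M.E := hC.1.1
  have hCne : C.Nonempty := M.circuit_nonempty hC
  have ht0 : 0 ≤ t := hlX ▸ M.lambda_nonneg hXE
  constructor
  · -- X ∩ C is nonempty
    by_contra hne
    have hXC : X ∩ C = ∅ := Finset.not_nonempty_iff_eq_empty.mp hne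
    have hXCd : Disjoint X C := Finset.disjoint_iff_inter_eq_empty.mpr hXC
    have hlen : ((L.take L.length).toFinset ∩ C) ≠ ∅ := by
      rw [List.take_length, hL, Finset.inter_eq_right.mpr hCE]
      exact Finset.nonempty_iff_ne_empty.mp hCne
    have hexists : ∃ n, ((L.take n).toFinset ∩ C) ≠ ∅ := ⟨L.length, hlen⟩
    have hq := Nat.find_spec hexists
    have hq_le : Nat.find hexists ≤ L.length := Nat.find_min' hexists hlen
    have hq0 : Nat.find hexists ≠ 0 := by
      intro h
      rw [h] at hq
      simp at hq
    obtain ⟨q', hq'⟩ : ∃ q', Nat.find hexists = q' + 1 :=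
      ⟨Nat.find hexists - 1, by omega⟩
    rw [hq'] at hq hq_le
    have hiq : i < q' + 1 := by
      by_contra h
      push_neg at h
      apply hq
      have hsub : (L.take (q' + 1)).toFinset ∩ C ⊆ X ∩ C :=
        Finset.inter_subset_inter (hX ▸ take_toFinset_subset L h) (Finset.Subset.refl C)
      rw [hXC] at hsub
      exact Finset.subset_empty.mp hsub
    have hmin : (L.take q').toFinset ∩ C = ∅ :=
      not_not.mp (Nat.find_min hexists (show q' < Nat.find hexists by omega))
    clear hq' hq0 hexists hlen
    obtain ⟨f, hfPC⟩ := Finset.nonempty_iff_ne_empty.mpr hq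
    have hfP1 : f ∈ (L.take (q' + 1)).toFinset := (Finset.mem_inter.mp hfPC).1
    have hfC : f ∈ C := (Finset.mem_inter.mp hfPC).2
    have huniq : ∀ x, x ∈ (L.take (q' + 1)).toFinset → x ∈ C → x = f := by
      intro x hx1 hx2
      refine mem_take_succ_unique hx1 ?_ hfP1 ?_
      · intro h
        have hmem : x ∈ (L.take q').toFinset ∩ C := Finset.mem_inter.mpr ⟨h, hx2⟩
        rw [hmin] at hmem
        exact absurd hmem (Finset.notMem_empty x)
      · intro h
        have hmem : f ∈ (L.take q').toFinset ∩ C := Finset.mem_inter.mpr ⟨h, hfC⟩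
        rw [hmin] at hmem
        exact absurd hmem (Finset.notMem_empty f)
    have hXP : X ⊆ (L.take (q' + 1)).toFinset := hX ▸ take_toFinset_subset L (by omega)
    have hPE : (L.take (q' + 1)).toFinset ⊆ M.E := by
      intro x hx
      rw [List.mem_toFinset] at hx
      rw [← hL, List.mem_toFinset]
      exact List.take_subset _ _ hx
    have hZE : ((L.take (q' + 1)).toFinset \ X) \ {f} ⊆ M.E :=
      fun x hx => hPE (Finset.mem_sdiff.mp (Finset.mem_sdiff.mp hx).1).1
    have hZX : Disjoint (((L.take (q' + 1)).toFinset \ X) \ {f}) X := by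
      rw [Finset.disjoint_left]
      intro x hx
      exact (Finset.mem_sdiff.mp (Finset.mem_sdiff.mp hx).1).2
    have hZC : Disjoint (((L.take (q' + 1)).toFinset \ X) \ {f}) C := by
      rw [Finset.disjoint_left]
      intro x hx hxC
      rcases Finset.mem_sdiff.mp hx with ⟨hx1, hx2⟩
      rcases Finset.mem_sdiff.mp hx1 with ⟨hx3, _⟩
      exact hx2 (Finset.mem_singleton.mpr (huniq x hx3 hxC))
    have hdecomp : X ∪ (((L.take (q' + 1)).toFinset \ X) \ {f}) ∪ {f}
        = (L.take (q' + 1)).toFinset := by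
      ext x
      simp only [Finset.mem_union, Finset.mem_sdiff, Finset.mem_singleton]
      have e1 : x ∈ X → x ∈ (L.take (q' + 1)).toFinset := fun h => hXP h
      have e2 : x = f → x ∈ (L.take (q' + 1)).toFinset := fun h => h ▸ hfP1
      tauto
    have hkey := M.key X hXE C hC hXCd hguts hmu
      (((L.take (q' + 1)).toFinset \ X) \ {f}) hZE hZX hZC f hfC
    rw [hdecomp] at hkey
    have hwle : M.lambda (L.take (q' + 1)).toFinset ≤ t := by
      rw [← hw]
      exact M.prefix_lambda_le L (show q' < L.length by omega)
    rw [hlX] at hkey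
    linarith
  · -- (E \ X) ∩ C is nonempty
    by_contra hne
    have hYC : (M.E \ X) ∩ C = ∅ := Finset.not_nonempty_iff_eq_empty.mp hne
    have hYCd : Disjoint (M.E \ X) C := Finset.disjoint_iff_inter_eq_empty.mpr hYC
    have hCX : C ⊆ X := by
      intro x hx
      by_contra hxX
      have hmem : x ∈ (M.E \ X) ∩ C :=
        Finset.mem_inter.mpr ⟨Finset.mem_sdiff.mpr ⟨hCE hx, hxX⟩, hx⟩
      rw [hYC] at hmem
      exact absurd hmem (Finset.notMem_empty x)
    have hCXi : C ⊆ (L.take i).toFinset := hX ▸ hCX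
    have hexists : ∃ n, C ⊆ (L.take n).toFinset := ⟨i, hCXi⟩
    have hq := Nat.find_spec hexists
    have hq_le : Nat.find hexists ≤ i := Nat.find_min' hexists hCXi
    have hq0 : Nat.find hexists ≠ 0 := by
      intro h
      rw [h] at hq
      simp only [List.take_zero, List.toFinset_nil, Finset.subset_empty] at hq
      rw [hq] at hCne
      exact Finset.not_nonempty_empty hCne
    obtain ⟨q', hq'⟩ : ∃ q', Nat.find hexists = q' + 1 :=
      ⟨Nat.find hexists - 1, by omega⟩
    rw [hq'] at hq hq_le
    have hmin : ¬ C ⊆ (L.take q').toFinset :=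
      Nat.find_min hexists (show q' < Nat.find hexists by omega)
    clear hq' hq0 hexists
    obtain ⟨f, hfC, hfP⟩ := Finset.not_subset.mp hmin
    have hPX : (L.take q').toFinset ⊆ X := hX ▸ take_toFinset_subset L (by omega)
    have hPE : (L.take q').toFinset ⊆ M.E := hPX.trans hXE
    have huniq : ∀ x, x ∈ C → x ∉ (L.take q').toFinset → x = f := by
      intro x hx1 hx2
      exact mem_take_succ_unique (hq hx1) hx2 (hq hfC) hfP
    have hZE : (X \ (L.take q').toFinset) \ {f} ⊆ M.E :=
      fun x hx => hXE (Finset.mem_sdiff.mp (Finset.mem_sdiff.mp hx).1).1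
    have hZY : Disjoint ((X \ (L.take q').toFinset) \ {f}) (M.E \ X) := by
      rw [Finset.disjoint_left]
      intro x hx hxE
      exact (Finset.mem_sdiff.mp hxE).2 (Finset.mem_sdiff.mp (Finset.mem_sdiff.mp hx).1).1
    have hZC : Disjoint ((X \ (L.take q').toFinset) \ {f}) C := by
      rw [Finset.disjoint_left]
      intro x hx hxC
      rcases Finset.mem_sdiff.mp hx with ⟨hx1, hx2⟩
      rcases Finset.mem_sdiff.mp hx1 with ⟨_, hx3⟩
      exact hx2 (Finset.mem_singleton.mpr (huniq x hxC hx3))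
    have hEY : M.E \ (M.E \ X) = X := by
      rw [Finset.sdiff_sdiff_self_left, Finset.inter_eq_right.mpr hXE]
    have hguts' : ∀ e ∈ C, e ∉ M.cl (M.E \ X) ∩ M.cl (M.E \ (M.E \ X)) := by
      intro e he
      rw [hEY, Finset.inter_comm]
      exact hguts e he
    have hmu' : M.mu (M.E \ X) C = (M.r C : ℤ) := by
      unfold FinMatroid.mu at hmu ⊢
      rw [hEY]
      linarith
    have hkey := M.key (M.E \ X) Finset.sdiff_subset C hC hYCd hguts' hmu'
      ((X \ (L.take q').toFinset) \ {f}) hZE hZY hZC f hfC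
    have hfX : f ∈ X := hCX hfC
    have hdecomp : (M.E \ X) ∪ ((X \ (L.take q').toFinset) \ {f}) ∪ {f}
        = M.E \ (L.take q').toFinset := by
      ext x
      simp only [Finset.mem_union, Finset.mem_sdiff, Finset.mem_singleton]
      have e1 : x ∈ (L.take q').toFinset → x ∈ X := fun h => hPX h
      have e2 : x ∈ X → x ∈ M.E := fun h => hXE h
      have e3 : x = f → x ∈ X := fun h => h ▸ hfX
      have e4 : x = f → x ∉ (L.take q').toFinset := fun h => h ▸ hfP
      tauto
    rw [hdecomp] at hkey
    have hlamY : M.lambda (M.E \ X) = t := by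
      unfold FinMatroid.lambda at hlX ⊢
      rw [hEY]
      linarith
    have hlamP : M.lambda (M.E \ (L.take q').toFinset) = M.lambda (L.take q').toFinset := by
      unfold FinMatroid.lambda
      rw [Finset.sdiff_sdiff_self_left, Finset.inter_eq_right.mpr hPE]
      ring
    rw [hlamY, hlamP] at hkey
    have hwle : M.lambda (L.take q').toFinset ≤ t := by
      rcases Nat.eq_zero_or_pos q' with h0 | h0
      · subst h0
        have hempty : M.lambda (L.take 0).toFinset = 0 := by
          unfold FinMatroid.lambda
          simp [M.r_empty]
        rw [hempty]
        exact ht0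
      · obtain ⟨j, rfl⟩ : ∃ j, q' = j + 1 := ⟨q' - 1, by omega⟩
        rw [← hw]
        exact M.prefix_lambda_le L (show j < L.length by omega)
    linarith
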